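/- Let n be a natural number with n ≡ 3 (mod 8). Then n belongs to B if and only if the number of triples (a,b,c) of nonnegative integers with n = a² + 2b² + 8c² is odd. -/

import Mathlib

open PowerSeries Finset

/-- `g = ∑_{n ≥ 0} x^{n²}` in `(ℤ/2ℤ)[[x]]`: the coefficient of `x^m` is `1`
exactly when `m` is a perfect square. -/
noncomputable def g : PowerSeries (ZMod 2) :=
  PowerSeries.mk fun m => if IsSquare m then 1 else 0

/-- `B` is the set of `n` for which the coefficient of `x^n` in `1/g` equals `1`. -/
noncomputable def B : Set ℕ := {n | PowerSeries.coeff n g⁻¹ = 1}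


lemma two_eq_zero' : (2 : (ZMod 2)⟦X⟧) = 0 := by
  rw [show (2 : (ZMod 2)⟦X⟧) = ((2:ℕ):_) by norm_cast, ← map_natCast ((PowerSeries.C (R := ZMod 2))) 2]
  have : ((2:ℕ) : ZMod 2) = 0 := by decide
  rw [this, map_zero]

lemma zmod2_mul_self : ∀ x : ZMod 2, x * x = x := by decide

lemma zmod2_add_eq_zero : ∀ x y : ZMod 2, x + y = 0 → x = y := by decide

lemma coeff_g (m : ℕ) : coeff m g = if IsSquare m then 1 else 0 := coeff_mk _ _

lemma hg1 : g * g⁻¹ = 1 := by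
  apply PowerSeries.mul_inv_cancel
  rw [g, constantCoeff_mk]
  have : IsSquare (0:ℕ) := ⟨0, rfl⟩
  simp [this]

lemma sq_mod8 {m : ℕ} (h : IsSquare m) : m % 8 = 0 ∨ m % 8 = 1 ∨ m % 8 = 4 := by
  obtain ⟨a, rfl⟩ := h
  have h1 : a % 8 < 8 := Nat.mod_lt _ (by norm_num)
  have h2 : a * a % 8 = (a % 8) * (a % 8) % 8 := by rw [Nat.mul_mod]
  interval_cases h : a % 8 <;> omega

lemma isSquare_two_mul (e : ℕ) : IsSquare (2 * e) ↔ e % 2 = 0 ∧ IsSquare (e / 2) := by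
  constructor
  · rintro ⟨a, ha⟩
    have ha2 : a % 2 = 0 := by
      rcases Nat.even_or_odd a with h | h
      · exact Nat.even_iff.mp h
      · exfalso
        obtain ⟨k, rfl⟩ := h
        have : (2*k+1) * (2*k+1) = 2*(2*k*k+2*k)+1 := by ring
        omega
    obtain ⟨t, rfl⟩ := (Nat.even_iff.mpr ha2)
    have h4 : (t + t) * (t + t) = 2 * (2 * (t*t)) := by ring
    refine ⟨by omega, ⟨t, by omega⟩⟩
  · rintro ⟨he, t, ht⟩
    refine ⟨2 * t, ?_⟩
    have : 2 * t * (2 * t) = 2 * (2 * (t * t)) := by ring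
    omega


lemma coeff_sq (s : (ZMod 2)⟦X⟧) (k : ℕ) :
    coeff k (s ^ 2) = if k % 2 = 0 then coeff (k / 2) s else 0 := by
  rw [sq, coeff_mul]
  rcases Nat.even_or_odd k with ⟨m, rfl⟩ | hk
  · have hmm : (m, m) ∈ antidiagonal (m + m) := by rw [Finset.HasAntidiagonal.mem_antidiagonal]
    rw [← Finset.add_sum_erase _ _ hmm]
    have h0 : ∑ p ∈ (antidiagonal (m+m)).erase (m, m),
        coeff p.1 s * coeff p.2 s = 0 := by
      apply Finset.sum_involution (fun p _ => (p.2, p.1))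
      · intro p hp
        have : ∀ x y : ZMod 2, x * y + y * x = 0 := by decide
        exact this _ _
      · rintro ⟨p1, p2⟩ hp _
        simp only [Finset.mem_erase, Finset.HasAntidiagonal.mem_antidiagonal, Prod.mk.injEq, Ne] at hp ⊢
        intro h
        obtain ⟨h1, h2⟩ := h
        exact hp.1 ⟨by omega, by omega⟩
      · rintro ⟨p1, p2⟩ hp
        simp only [Finset.mem_erase, Finset.HasAntidiagonal.mem_antidiagonal, Prod.mk.injEq, Ne] at hp ⊢
        constructor
        · intro ⟨h1, h2⟩
          exact hp.1 ⟨by omega, by omega⟩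
        · omega
      · intro p hp; rfl
    rw [h0, add_zero, zmod2_mul_self]
    rw [if_pos (by omega)]
    have h2 : (m + m) / 2 = m := by omega
    rw [h2]
  · obtain ⟨m, rfl⟩ := hk
    rw [if_neg (by omega)]
    apply Finset.sum_involution (fun p _ => (p.2, p.1))
    · intro p hp
      have : ∀ x y : ZMod 2, x * y + y * x = 0 := by decide
      exact this _ _
    · rintro ⟨p1, p2⟩ hp _
      simp only [Finset.HasAntidiagonal.mem_antidiagonal] at hp
      simp only [Prod.mk.injEq, Ne]
      intro h
      obtain ⟨h1, h2⟩ := h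
      omega
    · rintro ⟨p1, p2⟩ hp
      simp only [Finset.HasAntidiagonal.mem_antidiagonal] at hp ⊢
      omega
    · intro p hp; rfl

lemma coeff_pow4 (s : (ZMod 2)⟦X⟧) (k : ℕ) :
    coeff k (s ^ 4) = if k % 4 = 0 then coeff (k / 4) s else 0 := by
  have : s ^ 4 = (s ^ 2) ^ 2 := by ring
  rw [this, coeff_sq]
  rcases Nat.decEq (k % 2) 0 with h | h
  · rw [if_neg h, if_neg (by omega)]
  · rw [if_pos h, coeff_sq]
    rcases Nat.decEq ((k/2) % 2) 0 with h2 | h2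
    · rw [if_neg h2, if_neg (by omega)]
    · rw [if_pos h2, if_pos (by omega)]
      rw [Nat.div_div_eq_div_mul]

noncomputable def th (k : ℕ) : (ZMod 2)⟦X⟧ :=
  PowerSeries.mk fun j => if (j % k = 0 ∧ IsSquare (j / k)) then 1 else 0

lemma sqrt_key {k i t : ℕ} (hk : 0 < k) (hik : i % k = 0) (ht : i / k = t * t) :
    k * (Nat.sqrt (i / k))^2 = i := by
  rw [ht, Nat.sqrt_eq, pow_two, ← ht, Nat.mul_div_cancel' (Nat.dvd_of_mod_eq_zero hik)]

lemma coeff_th_mul (k : ℕ) (hk : 0 < k) (s : (ZMod 2)⟦X⟧) (n : ℕ) :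
    coeff n (th k * s) =
      ∑ a ∈ range (n+1), if k * a^2 ≤ n then coeff (n - k * a^2) s else 0 := by
  rw [coeff_mul, Finset.Nat.sum_antidiagonal_eq_sum_range_succ_mk]
  simp only [th, coeff_mk, ite_mul, one_mul, zero_mul]
  rw [← Finset.sum_filter, ← Finset.sum_filter]
  refine Finset.sum_bij' (fun i _ => Nat.sqrt (i / k)) (fun a _ => k * a^2) ?_ ?_ ?_ ?_ ?_
  · rintro i hi
    simp only [Finset.mem_filter, Finset.mem_range] at hi ⊢
    obtain ⟨hin, hik, t, ht⟩ := hi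
    have h1 : k * (Nat.sqrt (i/k))^2 = i := sqrt_key hk hik ht
    rw [ht, Nat.sqrt_eq] at h1 ⊢
    have h4 : k * t ^ 2 = k * (t * t) := by ring
    have h2 : t ≤ t * t := by
      rcases Nat.eq_zero_or_pos t with h | h
      · simp [h]
      · exact Nat.le_mul_of_pos_left t h
    have h3 : t * t ≤ k * (t * t) := Nat.le_mul_of_pos_left _ hk
    omega
  · rintro a ha
    simp only [Finset.mem_filter, Finset.mem_range] at ha ⊢
    obtain ⟨han, hale⟩ := ha
    refine ⟨by omega, Nat.mul_mod_right _ _, ?_⟩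
    rw [Nat.mul_div_cancel_left _ hk]
    exact ⟨a, (pow_two a)⟩
  · rintro i hi
    simp only [Finset.mem_filter, Finset.mem_range] at hi
    obtain ⟨hin, hik, t, ht⟩ := hi
    show k * (Nat.sqrt (i / k))^2 = i
    exact sqrt_key hk hik ht
  · rintro a ha
    show Nat.sqrt ((k * a^2) / k) = a
    rw [Nat.mul_div_cancel_left _ hk, pow_two, Nat.sqrt_eq]
  · rintro i hi
    simp only [Finset.mem_filter, Finset.mem_range] at hi
    obtain ⟨hin, hik, t, ht⟩ := hi
    show coeff (n - i) s = coeff (n - k * (Nat.sqrt (i/k))^2) s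
    rw [sqrt_key hk hik ht]


lemma g_eq_th1 : g = th 1 := by
  apply PowerSeries.ext
  intro j
  rw [coeff_g, th, coeff_mk]
  simp [Nat.mod_one]

lemma gsq_eq_th2 : g ^ 2 = th 2 := by
  apply PowerSeries.ext
  intro j
  rw [coeff_sq, th, coeff_mk, coeff_g]
  split_ifs with h1 h2 h3 h3 <;> first | rfl | (exfalso; tauto)

lemma g8_eq_th8 : g ^ 8 = th 8 := by
  apply PowerSeries.ext
  intro j
  have : g ^ 8 = (g ^ 2) ^ 4 := by ring
  rw [this, coeff_pow4, th, coeff_mk]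
  by_cases h4 : j % 4 = 0
  · rw [if_pos h4, coeff_sq, coeff_g]
    have hd : j / 4 / 2 = j / 8 := by omega
    by_cases h2 : (j / 4) % 2 = 0
    · rw [if_pos h2, hd]
      have : j % 8 = 0 := by omega
      simp [this]
    · rw [if_neg h2]
      have : ¬ (j % 8 = 0) := by omega
      simp [this]
  · rw [if_neg h4]
    have : ¬ (j % 8 = 0) := by omega
    simp [this]

lemma zmod2_add_self : ∀ x : ZMod 2, x + x = 0 := by decide

lemma hg_even (e : ℕ) : coeff (2 * e) g = coeff e (g ^ 2) := by
  rw [coeff_g, coeff_sq]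
  by_cases h : e % 2 = 0
  · rw [if_pos h, coeff_g]
    by_cases h2 : IsSquare (e / 2)
    · rw [if_pos h2, if_pos ((isSquare_two_mul e).mpr ⟨h, h2⟩)]
    · rw [if_neg h2, if_neg (fun hs => h2 ((isSquare_two_mul e).mp hs).2)]
  · rw [if_neg h, if_neg (fun hs => h ((isSquare_two_mul e).mp hs).1)]

lemma hg3_even (l : ℕ) : coeff (2 * l) (g * g ^ 2) = coeff l (g * g ^ 2) := by
  have hL : coeff (2 * l) (g * g ^ 2)
      = ∑ j ∈ range (2 * l + 1), coeff j (g ^ 2) * coeff (2 * l - j) g := by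
    rw [mul_comm g (g ^ 2), coeff_mul, Finset.Nat.sum_antidiagonal_eq_sum_range_succ_mk]
  have hR : coeff l (g * g ^ 2)
      = ∑ e ∈ range (l + 1), coeff e g * coeff (l - e) (g ^ 2) := by
    rw [coeff_mul, Finset.Nat.sum_antidiagonal_eq_sum_range_succ_mk]
  rw [hL, hR]
  rw [← Finset.sum_filter_of_ne (p := fun j => j % 2 = 0)
    (by
      intro j hj hne
      by_contra hodd
      apply hne
      rw [coeff_sq, if_neg hodd, zero_mul])]
  refine Finset.sum_bij' (fun j _ => j / 2) (fun e _ => 2 * e) ?_ ?_ ?_ ?_ ?_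
  · rintro j hj
    simp only [Finset.mem_filter, Finset.mem_range] at hj ⊢
    omega
  · rintro e he
    simp only [Finset.mem_filter, Finset.mem_range] at he ⊢
    omega
  · rintro j hj
    simp only [Finset.mem_filter, Finset.mem_range] at hj
    show 2 * (j / 2) = j
    omega
  · rintro e he
    show 2 * e / 2 = e
    omega
  · rintro j hj
    simp only [Finset.mem_filter, Finset.mem_range] at hj
    obtain ⟨hjl, hj2⟩ := hj
    show coeff j (g ^ 2) * coeff (2 * l - j) g
       = coeff (j / 2) g * coeff (l - j / 2) (g ^ 2)
    have e1 : coeff j (g ^ 2) = coeff (j / 2) g := by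
      rw [coeff_sq, if_pos hj2]
    have e2 : coeff (2 * l - j) g = coeff (l - j / 2) (g ^ 2) := by
      have h3 : 2 * l - j = 2 * (l - j / 2) := by omega
      rw [h3, hg_even]
    rw [e1, e2]

lemma hg3_seven {m : ℕ} (hm : m % 8 = 7) : coeff m (g * g ^ 2) = 0 := by
  rw [coeff_mul, Finset.Nat.sum_antidiagonal_eq_sum_range_succ_mk]
  apply Finset.sum_eq_zero
  intro i hi
  simp only [Finset.mem_range] at hi
  simp only [coeff_sq, coeff_g]
  split_ifs with h1 h2 h3 <;>
    first
      | (exfalso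
         have hA := sq_mod8 h1
         have hB := sq_mod8 h3
         omega)
      | ring

lemma hDodd (j : ℕ) : coeff (2 * j) (g⁻¹ + g ^ 2) = 0 := by
  have h1 : g * g⁻¹ = 1 := hg1
  have key : g⁻¹ + g ^ 2 = (g * g ^ 2 + (g * g ^ 2) ^ 2) * (g⁻¹) ^ 4 := by
    have e1 : (g * g ^ 2 + (g * g ^ 2) ^ 2) * (g⁻¹) ^ 4
        = (g * g⁻¹) ^ 3 * g⁻¹ + (g * g⁻¹) ^ 4 * g ^ 2 := by ring
    rw [e1, h1, one_pow, one_pow, one_mul, one_mul]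
  rw [key, coeff_mul]
  apply Finset.sum_eq_zero
  rintro ⟨p, q⟩ hpq
  simp only [Finset.HasAntidiagonal.mem_antidiagonal] at hpq
  by_cases hq : q % 4 = 0
  · have hp : p % 2 = 0 := by omega
    obtain ⟨l, rfl⟩ : ∃ l, p = 2 * l := ⟨p / 2, by omega⟩
    have : coeff (2 * l) (g * g ^ 2 + (g * g ^ 2) ^ 2) = 0 := by
      rw [map_add, coeff_sq]
      by_cases hl : (2 * l) % 2 = 0
      · rw [if_pos hl]
        have : 2 * l / 2 = l := by omega
        rw [this, hg3_even, zmod2_add_self]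
      · omega
    rw [this, zero_mul]
  · rw [coeff_pow4, if_neg hq, mul_zero]

lemma coeff_inv_eq (n : ℕ) (hn : n % 8 = 3) :
    coeff n g⁻¹ = coeff n (g * (g ^ 2 * g ^ 8)) := by
  have h1 : g * g⁻¹ = 1 := hg1
  have hpow : (g⁻¹ + g ^ 2) ^ 4 = (g⁻¹) ^ 4 + (g ^ 2) ^ 4 := by
    have e : (g⁻¹ + g ^ 2) ^ 4 = (g⁻¹) ^ 4 + (g ^ 2) ^ 4
        + 2 * (2 * (g⁻¹)^3 * g^2 + 3 * (g⁻¹)^2 * (g^2)^2 + 2 * g⁻¹ * (g^2)^3) := by ring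
    rw [e, two_eq_zero', zero_mul, add_zero]
  have key : g⁻¹ + g * (g ^ 2 * g ^ 8) = (g * g ^ 2) * (g⁻¹ + g ^ 2) ^ 4 := by
    rw [hpow]
    have e1 : (g * g ^ 2) * ((g⁻¹) ^ 4 + (g ^ 2) ^ 4)
        = (g * g⁻¹) ^ 3 * g⁻¹ + g * (g ^ 2 * g ^ 8) := by ring
    rw [e1, h1, one_pow, one_mul]
  have hz : coeff n ((g * g ^ 2) * (g⁻¹ + g ^ 2) ^ 4) = 0 := by
    rw [coeff_mul]
    apply Finset.sum_eq_zero
    rintro ⟨p, q⟩ hpq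
    simp only [Finset.HasAntidiagonal.mem_antidiagonal] at hpq
    by_cases hq : q % 4 = 0
    · by_cases hq4 : (q / 4) % 2 = 0
      · have : coeff q ((g⁻¹ + g ^ 2) ^ 4) = 0 := by
          rw [coeff_pow4, if_pos hq]
          obtain ⟨j, hj⟩ : ∃ j, q / 4 = 2 * j := ⟨q / 8, by omega⟩
          rw [hj, hDodd]
        rw [this, mul_zero]
      · have hp : p % 8 = 7 := by omega
        rw [hg3_seven hp, zero_mul]
    · rw [coeff_pow4, if_neg hq, mul_zero]
  have := congrArg (coeff n) key
  rw [map_add, hz] at this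
  exact zmod2_add_eq_zero _ _ this
lemma nat_sq_le (x : ℕ) : x ≤ x ^ 2 := Nat.le_self_pow two_ne_zero x

lemma inner8 (r N : ℕ) (hr : r ≤ N) :
    coeff r (g ^ 8) = ∑ c ∈ range (N+1), if r = 8 * c ^ 2 then (1 : ZMod 2) else 0 := by
  rw [g8_eq_th8, th, coeff_mk]
  by_cases h : r % 8 = 0 ∧ IsSquare (r / 8)
  · obtain ⟨h8, t, ht⟩ := h
    rw [if_pos ⟨h8, t, ht⟩]
    have hts : t ^ 2 = t * t := pow_two t
    have hrt : r = 8 * t ^ 2 := by omega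
    have htmem : t ∈ range (N + 1) := by
      simp only [Finset.mem_range]
      have h2 : t ≤ t * t := by
        rcases Nat.eq_zero_or_pos t with h | h
        · simp [h]
        · exact Nat.le_mul_of_pos_left t h
      omega
    rw [Finset.sum_eq_single_of_mem t htmem]
    · rw [if_pos hrt]
    · intro c hc hne
      rw [if_neg]
      intro hc8
      apply hne
      have hcs : c ^ 2 = c * c := pow_two c
      have : c * c = t * t := by omega
      exact Nat.mul_self_inj.mp this
  · rw [if_neg h]
    symm
    apply Finset.sum_eq_zero
    intro c hc
    rw [if_neg]
    intro hc8
    apply h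
    have hcs : c ^ 2 = c * c := pow_two c
    exact ⟨by omega, ⟨c, by omega⟩⟩

lemma coeff_g_mul (s : (ZMod 2)⟦X⟧) (n : ℕ) :
    coeff n (g * s) =
      ∑ a ∈ range (n+1), if a ^ 2 ≤ n then coeff (n - a ^ 2) s else 0 := by
  have h : g * s = th 1 * s := by rw [g_eq_th1]
  rw [h, coeff_th_mul 1 one_pos]
  simp only [one_mul]

lemma coeff_gsq_mul (s : (ZMod 2)⟦X⟧) (n : ℕ) :
    coeff n (g ^ 2 * s) =
      ∑ b ∈ range (n+1), if 2 * b ^ 2 ≤ n then coeff (n - 2 * b ^ 2) s else 0 := by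
  have h : g ^ 2 * s = th 2 * s := by rw [gsq_eq_th2]
  rw [h, coeff_th_mul 2 two_pos]

lemma coeff_g11 (n : ℕ) :
    coeff n (g * (g ^ 2 * g ^ 8)) =
      ∑ a ∈ range (n+1), ∑ b ∈ range (n+1), ∑ c ∈ range (n+1),
        if n = a ^ 2 + 2 * b ^ 2 + 8 * c ^ 2 then (1 : ZMod 2) else 0 := by
  rw [coeff_g_mul]
  apply Finset.sum_congr rfl
  intro a ha
  by_cases hA : a ^ 2 ≤ n
  · rw [if_pos hA, coeff_gsq_mul]
    rw [Finset.sum_subset (Finset.range_subset_range.mpr (by omega : n - a ^ 2 + 1 ≤ n + 1))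
      (by
        intro b hb hbn
        simp only [Finset.mem_range] at hb hbn
        rw [if_neg]
        have := nat_sq_le b
        omega)]
    apply Finset.sum_congr rfl
    intro b hb
    by_cases hB : 2 * b ^ 2 ≤ n - a ^ 2
    · rw [if_pos hB, inner8 _ n (by omega)]
      apply Finset.sum_congr rfl
      intro c hc
      by_cases hC : n = a ^ 2 + 2 * b ^ 2 + 8 * c ^ 2
      · rw [if_pos (by omega), if_pos hC]
      · rw [if_neg (by omega), if_neg hC]
    · rw [if_neg hB]
      symm
      apply Finset.sum_eq_zero
      intro c hc
      rw [if_neg]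
      omega
  · rw [if_neg hA]
    symm
    apply Finset.sum_eq_zero
    intro b hb
    apply Finset.sum_eq_zero
    intro c hc
    rw [if_neg]
    omega
theorem stmt3 (n : ℕ) (hn : n % 8 = 3) :
    n ∈ B ↔
      Odd (Nat.card {t : ℕ × ℕ × ℕ // n = t.1 ^ 2 + 2 * t.2.1 ^ 2 + 8 * t.2.2 ^ 2}) := by
  classical
  set T : Finset (ℕ × ℕ × ℕ) :=
    (range (n+1) ×ˢ (range (n+1) ×ˢ range (n+1))).filter
      (fun t => n = t.1 ^ 2 + 2 * t.2.1 ^ 2 + 8 * t.2.2 ^ 2) with hT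
  have h3 : coeff n (g * (g ^ 2 * g ^ 8)) = (T.card : ZMod 2) := by
    rw [coeff_g11]
    have hs : ∑ t ∈ (range (n+1) ×ˢ (range (n+1) ×ˢ range (n+1))),
        (if n = t.1 ^ 2 + 2 * t.2.1 ^ 2 + 8 * t.2.2 ^ 2 then (1 : ZMod 2) else 0)
        = ∑ a ∈ range (n+1), ∑ b ∈ range (n+1), ∑ c ∈ range (n+1),
          if n = a ^ 2 + 2 * b ^ 2 + 8 * c ^ 2 then (1 : ZMod 2) else 0 := by
      rw [Finset.sum_product]
      apply Finset.sum_congr rfl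
      intro a _
      rw [Finset.sum_product]
    rw [← hs, ← Finset.sum_filter, ← hT, Finset.sum_const, nsmul_eq_mul, mul_one]
  have h4 : Nat.card {t : ℕ × ℕ × ℕ // n = t.1 ^ 2 + 2 * t.2.1 ^ 2 + 8 * t.2.2 ^ 2} = T.card := by
    have hiff : ∀ t : ℕ × ℕ × ℕ,
        (n = t.1 ^ 2 + 2 * t.2.1 ^ 2 + 8 * t.2.2 ^ 2) ↔ t ∈ T := by
      intro t
      rw [hT, Finset.mem_filter, Finset.mem_product, Finset.mem_product]
      simp only [Finset.mem_range]
      constructor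
      · intro h
        have h1 := nat_sq_le t.1
        have h2 := nat_sq_le t.2.1
        have h3 := nat_sq_le t.2.2
        exact ⟨⟨by omega, by omega, by omega⟩, h⟩
      · tauto
    rw [Nat.card_congr (Equiv.subtypeEquivRight hiff), Nat.card_eq_fintype_card,
      Fintype.card_coe]
  have hodd : (T.card : ZMod 2) = 1 ↔ Odd T.card := by
    obtain ⟨k, hk⟩ | ⟨k, hk⟩ := Nat.even_or_odd T.card <;> rw [hk]
    · push_cast
      rw [zmod2_add_self]
      constructor
      · intro h; exact absurd h (by decide)
      · intro h; exfalso; exact (Nat.not_odd_iff_even.mpr ⟨k, rfl⟩) (hk ▸ h)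
    · push_cast
      have h2 : (2 : ZMod 2) = 0 := by decide
      rw [h2, zero_mul, zero_add]
      constructor
      · intro _; exact ⟨k, rfl⟩
      · intro _; rfl
  show coeff n g⁻¹ = 1 ↔ _
  rw [coeff_inv_eq n hn, h3, h4, hodd]
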